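/- Suppose nonnegative reals $\bar{q}, \bar{c}_C, \bar{c}_I, \bar{c}_{DC}$ satisfy $n = \bar{q} + \bar{c}_C + \bar{c}_I + \bar{c}_{DC}$ and the balance equation $\bar{c}_C \cdot r_c = (n - \bar{c}_C - \bar{c}_I) \cdot r_d$ with $r_c, r_d > 0$, and suppose $\bar{q} \geq T_R \alpha \lambda$ for some $T_R, \alpha, \lambda > 0$. Then, with $r = r_d/r_c$, it holds that $n \geq (1+r) T_R \alpha \lambda$. -/
import Mathlib


theorem first_order_fleet_lower_bound
    (n q cC cI cDC rc rd TR α lam : ℝ)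
    (hq : 0 ≤ q) (hcC : 0 ≤ cC) (hcI : 0 ≤ cI) (hcDC : 0 ≤ cDC)
    (hrc : 0 < rc) (hrd : 0 < rd) (hTR : 0 < TR) (hα : 0 < α) (hlam : 0 < lam)
    (hsum : n = q + cC + cI + cDC)
    (hbal : cC * rc = (n - cC - cI) * rd)
    (hqge : q ≥ TR * α * lam) :
    n ≥ (1 + rd / rc) * TR * α * lam := by
  have hcCge : cC * rc ≥ q * rd := by nlinarith
  have h1 : n ≥ q + cC := by nlinarith
  have h2 : cC ≥ q * (rd / rc) := by
    rw [ge_iff_le, mul_div_assoc', div_le_iff₀ hrc]; linarith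
  have h3 : (1 + rd / rc) * TR * α * lam ≤ (1 + rd / rc) * q := by
    have : 0 < 1 + rd / rc := by positivity
    have hT : TR * α * lam ≤ q := hqge
    nlinarith
  nlinarith
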